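/- arXiv:math/0501271 — 2 statements merged into one kernel-verified Lean document; each statement's English description precedes it below -/
import Mathlib

section
/- (Carlitz implication in Theorem 1.1.) If an arithmetical function f : ℤ⁺ → ℂ satisfies f(n)·τ(n) = (f *_D f)(n) for all n ∈ ℤ⁺, then f is completely multiplicative, i.e. f(mn) = f(m)·f(n) for all m, n ∈ ℤ⁺. -/
/-- The Dirichlet convolution of two arithmetical functions
`(f *_D g)(n) = ∑_{d ∣ n} f(d) g(n/d)`. -/
noncomputable def dirichletConv (f g : ℕ → ℂ) : ℕ → ℂ :=
  fun n => ∑ d ∈ n.divisors, f d * g (n / d)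

/-- The arithmetical function `ζ`, with `ζ(n) = 1` for all `n ∈ ℤ⁺`. -/
def zetaFn : ℕ → ℂ := fun _ => 1

/-- `τ = ζ *_D ζ`, the number-of-divisors function. -/
noncomputable def tauFn : ℕ → ℂ := dirichletConv zetaFn zetaFn

noncomputable def gFn (f : ℕ → ℂ) (n : ℕ) : ℂ :=
  n.factorization.prod (fun p k => f p ^ k)

lemma tauFn_eq (n : ℕ) : tauFn n = (n.divisors.card : ℂ) := by
  simp [tauFn, dirichletConv, zetaFn]

lemma gFn_one (f : ℕ → ℂ) : gFn f 1 = 1 := by simp [gFn]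

lemma gFn_mul (f : ℕ → ℂ) {m n : ℕ} (hm : m ≠ 0) (hn : n ≠ 0) :
    gFn f (m * n) = gFn f m * gFn f n := by
  unfold gFn
  rw [Nat.factorization_mul hm hn,
    Finsupp.prod_add_index' (fun p => pow_zero _) (fun p a b => pow_add _ _ _)]

lemma gFn_prime (f : ℕ → ℂ) {p : ℕ} (hp : p.Prime) : gFn f p = f p := by
  simp [gFn, hp.factorization]

lemma f_one_sq (f : ℕ → ℂ)
    (h : ∀ n : ℕ, 0 < n → f n * tauFn n = dirichletConv f f n) :
    f 1 = f 1 * f 1 := by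
  have := h 1 one_pos
  simpa [tauFn_eq, dirichletConv] using this

lemma all_zero (f : ℕ → ℂ)
    (h : ∀ n : ℕ, 0 < n → f n * tauFn n = dirichletConv f f n)
    (h1 : f 1 = 0) : ∀ n : ℕ, 0 < n → f n = 0 := by
  intro n
  induction n using Nat.strong_induction_on with
  | _ n ih =>
    intro hn
    rcases eq_or_ne n 1 with rfl | hn1
    · exact h1
    have hsum : dirichletConv f f n = 0 := by
      unfold dirichletConv
      apply Finset.sum_eq_zero
      intro d hd
      rw [Nat.mem_divisors] at hd
      rcases eq_or_ne d n with rfl | hdn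
      · simp [Nat.div_self hn, h1]
      · have hd0 : 0 < d := Nat.pos_of_dvd_of_pos hd.1 hn
        have hlt : d < n := lt_of_le_of_ne (Nat.le_of_dvd hn hd.1) hdn
        rw [ih d hlt hd0, zero_mul]
    have := h n hn
    rw [hsum, tauFn_eq] at this
    have hcard : (n.divisors.card : ℂ) ≠ 0 := by
      have : 0 < n.divisors.card :=
        Finset.card_pos.mpr ⟨1, Nat.one_mem_divisors.mpr hn.ne'⟩
      exact_mod_cast this.ne'
    exact (mul_eq_zero.mp this).resolve_right hcard

lemma f_eq_g (f : ℕ → ℂ)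
    (h : ∀ n : ℕ, 0 < n → f n * tauFn n = dirichletConv f f n)
    (h1 : f 1 = 1) : ∀ n : ℕ, 0 < n → f n = gFn f n := by
  intro n
  induction n using Nat.strong_induction_on with
  | _ n ih =>
    intro hn
    rcases eq_or_ne n 1 with rfl | hn1
    · rw [h1, gFn_one]
    rcases em n.Prime with hp | hp
    · rw [gFn_prime f hp]
    -- n composite, n > 1
    have hn0 : n ≠ 0 := hn.ne'
    have hn2 : 2 ≤ n := (Nat.two_le_iff n).mpr ⟨hn0, hn1⟩
    obtain ⟨m, hmdvd, hm2, hmlt⟩ := Nat.exists_dvd_of_not_prime2 hn2 hp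
    have h1mem : 1 ∈ n.divisors := Nat.one_mem_divisors.mpr hn0
    have hnmem : n ∈ n.divisors := Nat.mem_divisors_self n hn0
    -- split the sum
    set s := (n.divisors.erase 1).erase n with hs
    have hnmem' : n ∈ n.divisors.erase 1 := Finset.mem_erase.mpr ⟨hn1, hnmem⟩
    have hsplit : dirichletConv f f n
        = f 1 * f n + (f n * f 1 + ∑ d ∈ s, f d * f (n / d)) := by
      unfold dirichletConv
      rw [← Finset.add_sum_erase _ _ h1mem, Nat.div_one,
        ← Finset.add_sum_erase _ _ hnmem', Nat.div_self hn]
    have hterm : ∀ d ∈ s, f d * f (n / d) = gFn f n := by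
      intro d hd
      rw [hs, Finset.mem_erase, Finset.mem_erase, Nat.mem_divisors] at hd
      obtain ⟨hdn, hd1, hddvd, -⟩ := hd
      have hd0 : 0 < d := Nat.pos_of_dvd_of_pos hddvd hn
      have hdlt : d < n := lt_of_le_of_ne (Nat.le_of_dvd hn hddvd) hdn
      have hq0 : 0 < n / d := Nat.div_pos (Nat.le_of_dvd hn hddvd) hd0
      have hd2 : 2 ≤ d := (Nat.two_le_iff d).mpr ⟨hd0.ne', hd1⟩
      have hqlt : n / d < n := Nat.div_lt_self hn hd2
      rw [ih d hdlt hd0, ih _ hqlt hq0, ← gFn_mul f hd0.ne' hq0.ne',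
        Nat.mul_div_cancel' hddvd]
    have hsum : ∑ d ∈ s, f d * f (n / d) = (s.card : ℂ) * gFn f n := by
      rw [Finset.sum_congr rfl hterm, Finset.sum_const, nsmul_eq_mul]
    have hcard3 : 3 ≤ n.divisors.card := by
      have hsub : ({1, m, n} : Finset ℕ) ⊆ n.divisors := by
        intro x hx
        simp only [Finset.mem_insert, Finset.mem_singleton] at hx
        rcases hx with rfl | rfl | rfl
        · exact h1mem
        · exact Nat.mem_divisors.mpr ⟨hmdvd, hn0⟩
        · exact hnmem
      have hcard : ({1, m, n} : Finset ℕ).card = 3 := by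
        rw [Finset.card_insert_of_notMem, Finset.card_insert_of_notMem,
          Finset.card_singleton]
        · simp [hmlt.ne]
        · simp only [Finset.mem_insert, Finset.mem_singleton]
          push_neg
          exact ⟨by omega, by omega⟩
      calc 3 = ({1, m, n} : Finset ℕ).card := hcard.symm
        _ ≤ n.divisors.card := Finset.card_le_card hsub
    have hscard : s.card = n.divisors.card - 2 := by
      rw [hs, Finset.card_erase_of_mem hnmem', Finset.card_erase_of_mem h1mem]
      omega
    have heq := h n hn
    rw [hsplit, tauFn_eq, hsum, h1, mul_one, one_mul, hscard] at heq
    have hc : ((n.divisors.card - 2 : ℕ) : ℂ) = (n.divisors.card : ℂ) - 2 := by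
      push_cast [Nat.cast_sub (by omega : 2 ≤ n.divisors.card)]
      ring
    rw [hc] at heq
    have hne : (n.divisors.card : ℂ) - 2 ≠ 0 := by
      intro hzero
      have : (n.divisors.card : ℂ) = 2 := by linear_combination hzero
      have : n.divisors.card = 2 := by exact_mod_cast this
      omega
    have : ((n.divisors.card : ℂ) - 2) * (f n - gFn f n) = 0 := by
      linear_combination heq
    exact sub_eq_zero.mp ((mul_eq_zero.mp this).resolve_left hne)

/-- Carlitz implication of Theorem 1.1: if `f · τ = f *_D f` then `f` is
completely multiplicative. -/
theorem stmt_2 (f : ℕ → ℂ)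
    (h : ∀ n : ℕ, 0 < n → f n * tauFn n = dirichletConv f f n) :
    ∀ m n : ℕ, 0 < m → 0 < n → f (m * n) = f m * f n := by
  intro m n hm hn
  have h1 := f_one_sq f h
  rcases eq_or_ne (f 1) 0 with h0 | h0
  · have hz := all_zero f h h0
    rw [hz m hm, hz n hn, hz (m * n) (Nat.mul_pos hm hn), mul_zero]
  · have h1' : f 1 = 1 := by
      have hfac : f 1 * (f 1 - 1) = 0 := by linear_combination -h1
      rcases mul_eq_zero.mp hfac with hx | hx
      · exact absurd hx h0
      · exact sub_eq_zero.mp hx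
    have hg := f_eq_g f h h1'
    rw [hg m hm, hg n hn, hg (m * n) (Nat.mul_pos hm hn),
      gFn_mul f hm.ne' hn.ne']
end

section
/- (Additive version of Theorem 2.3, instantiating Theorem 2.2 at the Möbius category Red with B(n) = [n]_q!.) Let q ≥ 2 be a prime power and let F = Σ_{n≥0} a_n X^n ∈ ℂ[[X]] with a_1 ≠ 0. The following statements are equivalent: (1) a_n = n·a_1 / [n]_q! for all n ≥ 0; (2) the function hF : ℕ → ℂ, hF(m) = a_m·[m]_q!, is binomial additive, i.e. hF(m+n) = hF(m) + hF(n) for all m, n ≥ 0; (3) F ⊙_q (G·H) = (F ⊙_q G)·H + (F ⊙_q H)·G for all G, H ∈ ℂ[[X]]; (4) F ⊙_q (G·G) = 2·(F ⊙_q G)·G for all G ∈ ℂ[[X]]; (5) Σ_{n≥0} G_n(q)·a_n X^n = 2·(Σ_{n≥0} (1/[n]_q!) X^n)·F, where G_n(q) = Σ_{k=0}^{n} [n]_q!/([k]_q!·[n−k]_q!) are the Galois numbers. -/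
open PowerSeries Finset

/-- The `q`-factorial `[n]_q! = ∏_{i=1}^{n} (1 + q + ⋯ + q^{i-1})`, with `[0]_q! = 1`. -/
def qFactorial (q n : ℕ) : ℕ :=
  ∏ i ∈ Finset.range n, ∑ j ∈ Finset.range (i + 1), q ^ j

/-- The Galois number `Gₙ(q) = ∑_{k=0}^{n} [n]_q!/([k]_q!·[n−k]_q!)` (as a complex number). -/
noncomputable def galoisNumber (q n : ℕ) : ℂ :=
  ∑ k ∈ Finset.range (n + 1),
    (qFactorial q n : ℂ) / ((qFactorial q k : ℂ) * (qFactorial q (n - k) : ℂ))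

/-- The "multiplication" `⊙_q` of formal power series:
`(∑ aₙ Xⁿ) ⊙_q (∑ bₙ Xⁿ) = ∑ [n]_q!·aₙ·bₙ Xⁿ`. -/
noncomputable def odotQ (q : ℕ) (F G : PowerSeries ℂ) : PowerSeries ℂ :=
  PowerSeries.mk fun n => (qFactorial q n : ℂ) * PowerSeries.coeff n F * PowerSeries.coeff n G

lemma qFactorial_pos (q n : ℕ) : 0 < qFactorial q n :=
  Finset.prod_pos fun i _ => Finset.sum_pos' (fun _ _ => Nat.zero_le _)
    ⟨0, Finset.mem_range.mpr (Nat.succ_pos i), by simp⟩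

lemma qfC_ne (q n : ℕ) : (qFactorial q n : ℂ) ≠ 0 :=
  Nat.cast_ne_zero.mpr (qFactorial_pos q n).ne'

lemma qFactorial_zero (q : ℕ) : qFactorial q 0 = 1 := rfl

lemma qFactorial_one (q : ℕ) : qFactorial q 1 = 1 := by simp [qFactorial]

lemma coeff_two_mul (n : ℕ) (φ : ℂ⟦X⟧) :
    PowerSeries.coeff n (2 * φ) = 2 * PowerSeries.coeff n φ := by
  rw [show (2 : ℂ⟦X⟧) = C 2 from (map_ofNat C 2).symm, coeff_C_mul]

lemma coeff_rhs5 (q : ℕ) (F : ℂ⟦X⟧) (n : ℕ) :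
    PowerSeries.coeff n (2 * (PowerSeries.mk fun k => 1 / (qFactorial q k : ℂ)) * F)
      = 2 * ∑ k ∈ range (n + 1), 1 / (qFactorial q k : ℂ) * PowerSeries.coeff (n - k) F := by
  rw [mul_assoc, coeff_two_mul, coeff_mul, Finset.Nat.sum_antidiagonal_eq_sum_range_succ_mk]
  simp [coeff_mk]

/-- Additive version of Theorem 2.3 (Theorem 2.2 instantiated at the Möbius
category `Red`, whose parameters are `B(n) = [n]_q!`). -/
theorem stmt_11 (q : ℕ) (hq : IsPrimePow q) (hq2 : 2 ≤ q)
    (F : PowerSeries ℂ) (h1 : PowerSeries.coeff 1 F ≠ 0) :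
    [(∀ n : ℕ, PowerSeries.coeff n F
        = (n : ℂ) * PowerSeries.coeff 1 F / (qFactorial q n : ℂ)),
     (∀ m n : ℕ,
        PowerSeries.coeff (m + n) F * (qFactorial q (m + n) : ℂ)
          = PowerSeries.coeff m F * (qFactorial q m : ℂ)
              + PowerSeries.coeff n F * (qFactorial q n : ℂ)),
     (∀ G H : PowerSeries ℂ, odotQ q F (G * H) = odotQ q F G * H + odotQ q F H * G),
     (∀ G : PowerSeries ℂ, odotQ q F (G * G) = 2 * odotQ q F G * G),
     (PowerSeries.mk fun n => galoisNumber q n * PowerSeries.coeff n F)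
        = 2 * (PowerSeries.mk fun n => 1 / (qFactorial q n : ℂ)) * F].TFAE := by
  have hB : ∀ n : ℕ, (qFactorial q n : ℂ) ≠ 0 := qfC_ne q
  have hB1 : (qFactorial q 1 : ℂ) = 1 := by rw [qFactorial_one]; norm_num
  have hB0 : (qFactorial q 0 : ℂ) = 1 := by rw [qFactorial_zero]; norm_num
  tfae_have 1 → 2 := by
    intro h m n
    rw [h (m + n), h m, h n]
    field_simp [hB (m + n), hB m, hB n]
    push_cast; ring
  tfae_have 2 → 1 := by
    intro h2
    have h0 : PowerSeries.coeff 0 F = 0 := by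
      have := h2 0 0
      rw [hB0] at this
      simp only [Nat.add_zero, mul_one] at this
      linear_combination -this
    have key : ∀ n : ℕ, PowerSeries.coeff n F * (qFactorial q n : ℂ)
        = (n : ℂ) * PowerSeries.coeff 1 F := by
      intro n
      induction n with
      | zero => simp [h0]
      | succ k ih =>
        have := h2 k 1
        rw [hB1, mul_one, ih] at this
        rw [this]
        push_cast
        ring
    intro n
    rw [eq_div_iff (hB n), key n]
  tfae_have 2 → 3 := by
    intro h2 G H
    ext n
    simp only [odotQ, coeff_mk, map_add, coeff_mul, coeff_mk,
      Finset.Nat.sum_antidiagonal_eq_sum_range_succ_mk]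
    have reflect : ∑ k ∈ range (n + 1),
          (qFactorial q k : ℂ) * PowerSeries.coeff k F * PowerSeries.coeff k H
            * PowerSeries.coeff (n - k) G
        = ∑ k ∈ range (n + 1),
          (qFactorial q (n - k) : ℂ) * PowerSeries.coeff (n - k) F
            * PowerSeries.coeff (n - k) H * PowerSeries.coeff k G := by
      rw [← Finset.sum_range_reflect]
      apply Finset.sum_congr rfl
      intro k hk
      have hk' : k ≤ n := Nat.lt_succ_iff.mp (Finset.mem_range.mp hk)
      simp only [Nat.add_sub_cancel, Nat.sub_sub_self hk']
    rw [reflect, Finset.mul_sum, ← Finset.sum_add_distrib]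
    apply Finset.sum_congr rfl
    intro k hk
    have hk' : k ≤ n := Nat.lt_succ_iff.mp (Finset.mem_range.mp hk)
    have hkey := h2 k (n - k)
    rw [Nat.add_sub_cancel' hk'] at hkey
    linear_combination (PowerSeries.coeff k G * PowerSeries.coeff (n - k) H) * hkey
  tfae_have 3 → 4 := by
    intro h3 G
    rw [h3 G G]
    ring
  tfae_have 4 → 2 := by
    intro h4 m n
    by_cases hmn : m = n
    · subst hmn
      have H := congrArg (PowerSeries.coeff (m + m)) (h4 (X ^ m))
      rw [← pow_add] at H
      simp only [odotQ, coeff_mk, coeff_X_pow_self, mul_one] at H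
      rw [coeff_mul_X_pow, coeff_two_mul, coeff_mk, coeff_X_pow_self, mul_one] at H
      linear_combination H
    · have H := congrArg (PowerSeries.coeff (m + n)) (h4 (X ^ m + X ^ n))
      have hGG : ((X : ℂ⟦X⟧) ^ m + X ^ n) * ((X : ℂ⟦X⟧) ^ m + X ^ n)
          = X ^ (m + m) + X ^ (m + n) + (X ^ (m + n) + X ^ (n + n)) := by ring
      rw [hGG] at H
      have hne1 : m + n ≠ m + m := by omega
      have hne2 : m + n ≠ n + n := by omega
      rw [mul_add, map_add] at H
      rw [show m + n = n + m from add_comm m n, coeff_mul_X_pow,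
        show n + m = m + n from add_comm n m] at H
      rw [coeff_mul_X_pow] at H
      simp only [odotQ, coeff_mk, map_add, coeff_X_pow, if_neg hne1, if_neg hne2,
        if_pos rfl, coeff_two_mul, coeff_mk, eq_self_iff_true, if_true] at H
      rw [if_neg hmn, if_neg (Ne.symm hmn)] at H
      norm_num at H
      -- H should now give 2 * h(m+n) = 2 * h n + 2 * h m (roughly)
      ring_nf at H ⊢
      linear_combination H / 2
  tfae_have 2 → 5 := by
    intro h2
    ext n
    rw [coeff_mk, coeff_rhs5, galoisNumber, Finset.sum_mul]
    have step1 : ∀ k ∈ range (n + 1),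
        (qFactorial q n : ℂ) / ((qFactorial q k : ℂ) * (qFactorial q (n - k) : ℂ))
            * PowerSeries.coeff n F
          = PowerSeries.coeff k F / (qFactorial q (n - k) : ℂ)
            + PowerSeries.coeff (n - k) F / (qFactorial q k : ℂ) := by
      intro k hk
      have hk' : k ≤ n := Nat.lt_succ_iff.mp (Finset.mem_range.mp hk)
      have hkey := h2 k (n - k)
      rw [Nat.add_sub_cancel' hk'] at hkey
      field_simp [hB n, hB k, hB (n - k)]
      linear_combination hkey
    rw [Finset.sum_congr rfl step1, Finset.sum_add_distrib]
    have reflect : ∑ k ∈ range (n + 1),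
          PowerSeries.coeff k F / (qFactorial q (n - k) : ℂ)
        = ∑ k ∈ range (n + 1),
          PowerSeries.coeff (n - k) F / (qFactorial q k : ℂ) := by
      rw [← Finset.sum_range_reflect]
      apply Finset.sum_congr rfl
      intro k hk
      have hk' : k ≤ n := Nat.lt_succ_iff.mp (Finset.mem_range.mp hk)
      simp only [Nat.add_sub_cancel, Nat.sub_sub_self hk']
    rw [reflect, Finset.mul_sum, ← Finset.sum_add_distrib]
    apply Finset.sum_congr rfl
    intro k _
    ring
  tfae_have 5 → 1 := by
    intro h5
    have E : ∀ n : ℕ, galoisNumber q n * PowerSeries.coeff n F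
        = 2 * ∑ k ∈ range (n + 1),
            1 / (qFactorial q k : ℂ) * PowerSeries.coeff (n - k) F := by
      intro n
      have := congrArg (PowerSeries.coeff n) h5
      rwa [coeff_mk, coeff_rhs5] at this
    have ha0 : PowerSeries.coeff 0 F = 0 := by
      have := E 0
      simp [galoisNumber, qFactorial_zero] at this
      rw [PowerSeries.coeff_zero_eq_constantCoeff] at *
      linear_combination -this
    intro n
    induction n using Nat.strong_induction_on with
    | _ n IH =>
      match n with
      | 0 => simp [ha0, qFactorial_zero]
      | 1 => rw [hB1]; simp
      | (n + 2) =>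
        set N := n + 2 with hNdef
        have IH' : ∀ m, m < N → PowerSeries.coeff m F * (qFactorial q m : ℂ)
            = (m : ℂ) * PowerSeries.coeff 1 F := by
          intro m hm
          rw [IH m hm, div_mul_cancel₀ _ (hB m)]
        -- the key vanishing sum
        have claim : ∑ k ∈ range (N + 1),
            (PowerSeries.coeff N F * (qFactorial q N : ℂ)
              - PowerSeries.coeff k F * (qFactorial q k : ℂ)
              - PowerSeries.coeff (N - k) F * (qFactorial q (N - k) : ℂ))
              * ((qFactorial q k : ℂ)⁻¹ * (qFactorial q (N - k) : ℂ)⁻¹) = 0 := by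
          have e1 : ∑ k ∈ range (N + 1),
              PowerSeries.coeff N F * (qFactorial q N : ℂ)
                * ((qFactorial q k : ℂ)⁻¹ * (qFactorial q (N - k) : ℂ)⁻¹)
              = galoisNumber q N * PowerSeries.coeff N F := by
            rw [galoisNumber, Finset.sum_mul]
            apply Finset.sum_congr rfl
            intro k _
            field_simp
          have e2 : ∑ k ∈ range (N + 1),
              PowerSeries.coeff (N - k) F * (qFactorial q (N - k) : ℂ)
                * ((qFactorial q k : ℂ)⁻¹ * (qFactorial q (N - k) : ℂ)⁻¹)
              = ∑ k ∈ range (N + 1),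
                1 / (qFactorial q k : ℂ) * PowerSeries.coeff (N - k) F := by
            apply Finset.sum_congr rfl
            intro k _
            field_simp [hB k, hB (N - k)]
          have e3 : ∑ k ∈ range (N + 1),
              PowerSeries.coeff k F * (qFactorial q k : ℂ)
                * ((qFactorial q k : ℂ)⁻¹ * (qFactorial q (N - k) : ℂ)⁻¹)
              = ∑ k ∈ range (N + 1),
                1 / (qFactorial q k : ℂ) * PowerSeries.coeff (N - k) F := by
            rw [← Finset.sum_range_reflect]
            apply Finset.sum_congr rfl
            intro k hk
            have hk' : k ≤ N := Nat.lt_succ_iff.mp (Finset.mem_range.mp hk)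
            simp only [Nat.add_sub_cancel, Nat.sub_sub_self hk']
            field_simp [hB k, hB (N - k)]
          simp only [sub_mul, Finset.sum_sub_distrib]
          rw [e1, e2, e3, E N]
          ring
        -- k = 0 and k = N terms vanish, middle terms are constant multiples
        have hsplit : ∀ f : ℕ → ℂ, ∑ k ∈ range (N + 1), f k
            = f 0 + ∑ k ∈ Ico 1 N, f k + f N := by
          intro f
          rw [Finset.sum_range_succ, Finset.range_eq_Ico,
            Finset.sum_eq_sum_Ico_succ_bot (by omega : 0 < N)]
        rw [hsplit] at claim
        have t0 : (PowerSeries.coeff N F * (qFactorial q N : ℂ)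
            - PowerSeries.coeff 0 F * (qFactorial q 0 : ℂ)
            - PowerSeries.coeff (N - 0) F * (qFactorial q (N - 0) : ℂ))
            * ((qFactorial q 0 : ℂ)⁻¹ * (qFactorial q (N - 0) : ℂ)⁻¹) = 0 := by
          simp [ha0]
        have tN : (PowerSeries.coeff N F * (qFactorial q N : ℂ)
            - PowerSeries.coeff N F * (qFactorial q N : ℂ)
            - PowerSeries.coeff (N - N) F * (qFactorial q (N - N) : ℂ))
            * ((qFactorial q N : ℂ)⁻¹ * (qFactorial q (N - N) : ℂ)⁻¹) = 0 := by
          simp [ha0]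
        rw [t0, tN, zero_add, add_zero] at claim
        have mid : ∀ k ∈ Ico 1 N,
            (PowerSeries.coeff N F * (qFactorial q N : ℂ)
              - PowerSeries.coeff k F * (qFactorial q k : ℂ)
              - PowerSeries.coeff (N - k) F * (qFactorial q (N - k) : ℂ))
              * ((qFactorial q k : ℂ)⁻¹ * (qFactorial q (N - k) : ℂ)⁻¹)
            = (PowerSeries.coeff N F * (qFactorial q N : ℂ)
                - (N : ℂ) * PowerSeries.coeff 1 F)
              * ((qFactorial q k : ℂ)⁻¹ * (qFactorial q (N - k) : ℂ)⁻¹) := by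
          intro k hk
          have hk1 : 1 ≤ k := (Finset.mem_Ico.mp hk).1
          have hk2 : k < N := (Finset.mem_Ico.mp hk).2
          rw [IH' k hk2, IH' (N - k) (by omega)]
          have : ((N - k : ℕ) : ℂ) = (N : ℂ) - (k : ℂ) := by
            push_cast [Nat.cast_sub hk2.le]; ring
          rw [this]
          ring
        rw [Finset.sum_congr rfl mid, ← Finset.mul_sum] at claim
        have hWne : (∑ k ∈ Ico 1 N, ((qFactorial q k : ℂ)⁻¹ * (qFactorial q (N - k) : ℂ)⁻¹)) ≠ 0 := by
          have hcast : (∑ k ∈ Ico 1 N, ((qFactorial q k : ℂ)⁻¹ * (qFactorial q (N - k) : ℂ)⁻¹))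
              = ((∑ k ∈ Ico 1 N, ((qFactorial q k : ℝ)⁻¹ * (qFactorial q (N - k) : ℝ)⁻¹) : ℝ) : ℂ) := by
            push_cast
            ring
          rw [hcast]
          rw [Complex.ofReal_ne_zero]
          have hpos : 0 < ∑ k ∈ Ico 1 N, ((qFactorial q k : ℝ)⁻¹ * (qFactorial q (N - k) : ℝ)⁻¹) := by
            apply Finset.sum_pos
            · intro k _
              have p1 : (0:ℝ) < (qFactorial q k : ℝ) := by exact_mod_cast qFactorial_pos q k
              have p2 : (0:ℝ) < (qFactorial q (N - k) : ℝ) := by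
                exact_mod_cast qFactorial_pos q (N - k)
              positivity
            · exact ⟨1, Finset.mem_Ico.mpr ⟨le_refl 1, by omega⟩⟩
          exact hpos.ne'
        have hfinal := (mul_eq_zero.mp claim).resolve_right hWne
        rw [sub_eq_zero] at hfinal
        rw [eq_div_iff (hB N), hfinal]
  tfae_finish
end
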